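/- Fix n ≥ 1, a classifier M' over n features, an entity e, and a feature w ∈ Fin n such that M' does not depend on feature w, i.e., M'(e₁) = M'(e₂) whenever e₁ and e₂ agree on all features other than w. Then for every finite set S ⊆ Fin n with w ∉ S and every p : Fin n → ℝ with 0 ≤ p i ≤ 1 for all i, one has φ(M',e,S ∪ {w},p) = φ(M',e,S,p). -/

import Mathlib

/-- The conditional expectation `φ(M,e,S,p)` of the classifier `M` given that the
entity agrees with `e` on `S`, under the product distribution with parameters `p`. -/
noncomputable def phi {n : ℕ} (M : (Fin n → Bool) → Bool) (e : Fin n → Bool)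
    (S : Finset (Fin n)) (p : Fin n → ℝ) : ℝ :=
  ∑ e' ∈ Finset.univ.filter (fun e' : Fin n → Bool => ∀ i ∈ S, e' i = e i),
    (∏ i ∈ Sᶜ, (if e' i = true then p i else 1 - p i)) *
      (if M e' = true then (1 : ℝ) else 0)

theorem phi_insert_dummy_feature
    (n : ℕ) (hn : 1 ≤ n)
    (M' : (Fin n → Bool) → Bool) (e : Fin n → Bool) (w : Fin n)
    (hdummy : ∀ e₁ e₂ : Fin n → Bool, (∀ i, i ≠ w → e₁ i = e₂ i) → M' e₁ = M' e₂)
    (S : Finset (Fin n)) (hwS : w ∉ S)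
    (p : Fin n → ℝ) (hp : ∀ i, 0 ≤ p i ∧ p i ≤ 1) :
    phi M' e (insert w S) p = phi M' e S p := by
  classical
  have hwc : w ∈ Sᶜ := Finset.mem_compl.2 hwS
  have hset : (insert w S)ᶜ = Sᶜ.erase w := by
    ext i
    simp only [Finset.mem_compl, Finset.mem_erase, Finset.mem_insert, not_or]
  unfold phi
  symm
  rw [show (Finset.univ.filter (fun e' : Fin n → Bool => ∀ i ∈ S, e' i = e i))
        = ((Finset.univ.filter
            (fun e' : Fin n → Bool => ∀ i ∈ insert w S, e' i = e i)) ×ˢ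
            (Finset.univ : Finset Bool)).image
            (fun q : (Fin n → Bool) × Bool => Function.update q.1 w q.2) from ?_]
  · rw [Finset.sum_image ?_]
    · rw [Finset.sum_product]
      apply Finset.sum_congr rfl
      intro e'' he''
      simp only [Finset.mem_filter] at he''
      have hMw : ∀ b, M' (Function.update e'' w b) = M' e'' := by
        intro b
        exact hdummy _ _ fun i hi => Function.update_of_ne hi _ _
      have hprod : ∀ b, (∏ i ∈ Sᶜ, (if Function.update e'' w b i = true then p i else 1 - p i))
          = (if b = true then p w else 1 - p w) *
            ∏ i ∈ (insert w S)ᶜ, (if e'' i = true then p i else 1 - p i) := by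
        intro b
        rw [← Finset.mul_prod_erase Sᶜ _ hwc, Function.update_self, hset]
        congr 1
        apply Finset.prod_congr rfl
        intro i hi
        rw [Function.update_of_ne (Finset.mem_erase.1 hi).1]
      rw [Fintype.sum_bool, hprod, hprod, hMw, hMw]
      simp only [if_true, Bool.false_eq_true, if_false]
      ring
    · -- injectivity
      intro q1 hq1 q2 hq2 heq
      simp only [Finset.mem_coe, Finset.mem_product, Finset.mem_filter] at hq1 hq2
      have h2 : q1.2 = q2.2 := by
        have := congrFun heq w
        simpa using this
      have h1 : q1.1 = q2.1 := by
        funext i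
        by_cases hiw : i = w
        · subst hiw
          rw [hq1.1.2 i (Finset.mem_insert_self _ _), hq2.1.2 i (Finset.mem_insert_self _ _)]
        · have := congrFun heq i
          simpa [Function.update_of_ne hiw] using this
      exact Prod.ext h1 h2
  · -- set equality
    ext e'
    simp only [Finset.mem_image, Finset.mem_product, Finset.mem_filter, Finset.mem_univ,
      true_and, Finset.mem_insert]
    constructor
    · intro h
      refine ⟨(Function.update e' w (e w), e' w), ⟨?_, trivial⟩, ?_⟩
      · intro i hi
        rcases hi with hi | hi
        · subst hi; simp
        · have hne : i ≠ w := fun hc => hwS (hc ▸ hi)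
          simpa [Function.update_of_ne hne] using h i hi
      · simp [Function.update_idem]
    · rintro ⟨⟨f, b⟩, hf, rfl⟩
      intro i hi
      have hiw : i ≠ w := fun hc => hwS (hc ▸ hi)
      rw [Function.update_of_ne hiw]
      exact hf.1 i (Or.inr hi)
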